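/- Let k, r be positive integers, n = k + r, let ι be an n×k real matrix and β an r×n real matrix such that the sequence 0 → ℝ^k →(ι) ℝ^n →(β) ℝ^r → 0 is exact (ι injective, β surjective, ker β = im ι). Let p ⊆ {1,…,n} be a subset of size k whose corresponding rows of ι are linearly independent. Then the image under β of the relatively open orthant {x ∈ ℝ^n : x_i = 0 for i ∈ p and x_i > 0 for i ∉ p} equals the topological interior of the convex cone generated by the columns of β indexed by {1,…,n} \ p, i.e. the interior of {Σ_{i∉p} c_i β(e_i) : c_i ≥ 0}. -/

import Mathlib

open Set Matrix

theorem attracting_cone_eq_interior_of_cone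
    (k r : ℕ) (hk : 0 < k) (hr : 0 < r) (n : ℕ) (hn : n = k + r)
    (ι : Matrix (Fin n) (Fin k) ℝ) (β : Matrix (Fin r) (Fin n) ℝ)
    (hι : Function.Injective ι.mulVecLin)
    (hβ : Function.Surjective β.mulVecLin)
    (hexact : LinearMap.ker β.mulVecLin = LinearMap.range ι.mulVecLin)
    (p : Finset (Fin n)) (hp : p.card = k)
    (hrows : LinearIndependent ℝ (fun i : p => ι i.1)) :
    (⇑β.mulVecLin) '' {x : Fin n → ℝ | (∀ i ∈ p, x i = 0) ∧ ∀ i ∉ p, 0 < x i} =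
      interior {y : Fin r → ℝ | ∃ c : Fin n → ℝ,
        (∀ i, 0 ≤ c i) ∧ y = ∑ i ∈ pᶜ, c i • β.transpose i} := by
  classical
  -- mulVec as sum of columns
  have hmv : ∀ x : Fin n → ℝ, β.mulVecLin x = ∑ j, x j • β.transpose j := by
    intro x
    funext i
    simp [Matrix.mulVecLin_apply, Matrix.mulVec, dotProduct, Finset.sum_apply,
      Matrix.transpose_apply, mul_comm]
  -- key computation: if x vanishes on p, then β x is a sum over pᶜ
  have key : ∀ x : Fin n → ℝ, (∀ i ∈ p, x i = 0) →
      β.mulVecLin x = ∑ i : (pᶜ : Finset (Fin n)), x i.1 • β.transpose i.1 := by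
    intro x hx
    rw [hmv, Finset.sum_coe_sort (pᶜ) (fun j => x j • β.transpose j)]
    refine (Finset.sum_subset (Finset.subset_univ _) ?_).symm
    intro j _ hj
    rw [hx j (by simpa using hj)]
    simp
  -- cardinality
  have hcardS : Fintype.card (pᶜ : Finset (Fin n)) = r := by
    rw [Fintype.card_coe, Finset.card_compl, Fintype.card_fin, hp, hn]
    omega
  -- linear independence of the columns indexed by pᶜ
  have hli : LinearIndependent ℝ (fun i : (pᶜ : Finset (Fin n)) => β.transpose i.1) := by
    rw [Fintype.linearIndependent_iff]
    intro g hg j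
    set x : Fin n → ℝ := fun m => if h : m ∈ pᶜ then g ⟨m, h⟩ else 0 with hxdef
    have hx0 : ∀ i ∈ p, x i = 0 := by
      intro i hi
      simp [hxdef, hi]
    have hxker : β.mulVecLin x = 0 := by
      rw [key x hx0]
      rw [← hg]
      refine Finset.sum_congr rfl fun i _ => ?_
      rw [show x i.1 = g i from dif_pos i.2]
    have : x ∈ LinearMap.range ι.mulVecLin := hexact ▸ hxker
    obtain ⟨a, ha⟩ := this
    have hrow0 : ∀ i : p, ι i.1 ⬝ᵥ a = 0 := by
      intro i
      have := congrFun ha i.1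
      rw [hx0 i.1 i.2] at this
      simpa [Matrix.mulVecLin_apply, Matrix.mulVec] using this
    have hspan : Submodule.span ℝ (Set.range fun i : p => ι i.1) = ⊤ := by
      obtain ⟨w, hw⟩ := Finset.card_pos.mp (by rw [hp]; exact hk)
      have : Nonempty p := ⟨⟨w, hw⟩⟩
      refine hrows.span_eq_top_of_card_eq_finrank ?_
      simp [hp]
    have ha0 : a = 0 := by
      have hf : ∀ v : Fin k → ℝ, v ⬝ᵥ a = 0 := by
        intro v
        have hv : v ∈ Submodule.span ℝ (Set.range fun i : p => ι i.1) := by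
          rw [hspan]; trivial
        induction hv using Submodule.span_induction with
        | mem w hw => obtain ⟨i, rfl⟩ := hw; exact hrow0 i
        | zero => simp
        | add u w _ _ hu hw => simp [add_dotProduct, hu, hw]
        | smul t u _ hu => simp [smul_dotProduct, hu]
      funext m
      simpa using hf (Pi.single m 1)
    have hx0' : x = 0 := by rw [← ha, ha0]; simp
    have := congrFun hx0' j.1
    rwa [show x j.1 = g j from dif_pos j.2] at this
  -- a basis of ℝ^r from these columns
  have hcard' : Fintype.card (pᶜ : Finset (Fin n)) = Module.finrank ℝ (Fin r → ℝ) := by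
    rw [hcardS, Module.finrank_fin_fun]
  have : Nonempty (pᶜ : Finset (Fin n)) := Fintype.card_pos_iff.mp (by rw [hcardS]; exact hr)
  let b : Module.Basis (pᶜ : Finset (Fin n)) ℝ (Fin r → ℝ) :=
    basisOfLinearIndependentOfCardEqFinrank hli hcard'
  have hb : ∀ i, b i = β.transpose i.1 := fun i => by
    simp [b, coe_basisOfLinearIndependentOfCardEqFinrank]
  let φ : ((pᶜ : Finset (Fin n)) → ℝ) ≃ₗ[ℝ] (Fin r → ℝ) := b.equivFun.symm
  have hφ : ∀ c, φ c = ∑ i : (pᶜ : Finset (Fin n)), c i • β.transpose i.1 := by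
    intro c
    rw [show φ c = ∑ i, c i • b i from b.equivFun_symm_apply c]
    exact Finset.sum_congr rfl fun i _ => by rw [hb]
  -- LHS
  have hA : (⇑β.mulVecLin) '' {x : Fin n → ℝ | (∀ i ∈ p, x i = 0) ∧ ∀ i ∉ p, 0 < x i} =
      ⇑φ '' (univ.pi fun _ => Ioi (0:ℝ)) := by
    ext y
    constructor
    · rintro ⟨x, ⟨hx0, hxpos⟩, rfl⟩
      refine ⟨fun i => x i.1, fun i _ => hxpos i.1 (Finset.mem_compl.mp i.2), ?_⟩
      rw [hφ, ← key x hx0]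
    · rintro ⟨c, hc, rfl⟩
      refine ⟨fun m => if h : m ∈ pᶜ then c ⟨m, h⟩ else 0,
        ⟨fun i hi => by simp [hi], fun i hi => by
          simp only [dif_pos (Finset.mem_compl.2 hi)]
          exact hc _ (mem_univ _)⟩, ?_⟩
      rw [key _ (fun i hi => by simp [hi]), hφ]
      exact Finset.sum_congr rfl fun i _ => by simp [i.2]
  -- RHS base set
  have hB : {y : Fin r → ℝ | ∃ c : Fin n → ℝ,
      (∀ i, 0 ≤ c i) ∧ y = ∑ i ∈ pᶜ, c i • β.transpose i} =
      ⇑φ '' (univ.pi fun _ => Ici (0:ℝ)) := by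
    ext y
    constructor
    · rintro ⟨c, hc, rfl⟩
      refine ⟨fun i => c i.1, fun i _ => hc i.1, ?_⟩
      rw [hφ, Finset.sum_coe_sort (pᶜ) (fun j => c j • β.transpose j)]
    · rintro ⟨c, hc, rfl⟩
      refine ⟨fun m => if h : m ∈ pᶜ then c ⟨m, h⟩ else 0,
        fun i => by
          dsimp only
          split
          · exact hc _ (mem_univ _)
          · exact le_rfl, ?_⟩
      rw [hφ, ← Finset.sum_coe_sort (pᶜ) (fun j =>
        (if h : j ∈ pᶜ then c ⟨j, h⟩ else 0) • β.transpose j)]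
      exact Finset.sum_congr rfl fun i _ => by simp [i.2]
  rw [hA, hB]
  -- transfer interior through the linear homeomorphism
  let ψ := φ.toContinuousLinearEquiv.toHomeomorph
  have hψ : ⇑ψ = ⇑φ := rfl
  rw [← hψ, ← Homeomorph.image_interior, interior_pi_set finite_univ]
  simp
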